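/- For any geodesic ray γ in DL_d(q) and any 0 ≤ i < d, the projection γ^(i) to tree T_i converges to at most one end of T_i, and if γ^(i) traverses only finitely many edges then γ^(i) is eventually constant. -/

import Mathlib

/-- A vertex of the (q+1)-regular tree with a distinguished end, in the
horocyclic model: a height `k ∈ ℤ` together with a finitely supported
labelling of the levels strictly below `k`. -/
structure TreeVert (q : ℕ) where
  height : ℤ
  labels : ℤ → ℕ
  labels_lt : ∀ n, labels n = 0 ∨ labels n < q
  supp_below : ∀ n, height ≤ n → labels n = 0
  fin_supp : (Function.support labels).Finite

namespace DL

variable {q d : ℕ}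

/-- `v` is a child of `u` (one step further from the distinguished end). -/
abbrev treeAdjUp (u v : TreeVert q) : Prop :=
  v.height = u.height + 1 ∧ ∀ n, n ≠ u.height → v.labels n = u.labels n

/-- The (q+1)-regular tree. -/
def TreeGraph (q : ℕ) : SimpleGraph (TreeVert q) where
  Adj u v := treeAdjUp u v ∨ treeAdjUp v u
  symm := ⟨fun u v h => Or.symm h⟩
  loopless := by
    constructor
    intro u h
    rcases h with ⟨h1, _⟩ | ⟨h1, _⟩ <;> omega

/-- The base vertex of the tree. -/
def treeOrigin (q : ℕ) : TreeVert q :=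
  ⟨0, fun _ => 0, fun _ => Or.inl rfl, fun _ _ => rfl, by simp⟩

/-- Vertices of the Diestel–Leader graph `DL_d(q)`:
`d`-tuples of tree vertices whose heights sum to zero. -/
def DLVert (d q : ℕ) : Type :=
  {x : Fin d → TreeVert q // (∑ i, (x i).height) = 0}

/-- The Diestel–Leader graph `DL_d(q)`: an edge ascends in one tree and
descends in another, all other coordinates being fixed. -/
def DLGraph (d q : ℕ) : SimpleGraph (DLVert d q) where
  Adj v w := ∃ i j : Fin d, i ≠ j ∧ treeAdjUp (v.1 i) (w.1 i) ∧ treeAdjUp (w.1 j) (v.1 j) ∧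
      ∀ k : Fin d, k ≠ i → k ≠ j → v.1 k = w.1 k
  symm := by
    constructor
    rintro v w ⟨i, j, hij, h1, h2, h3⟩
    exact ⟨j, i, hij.symm, h2, h1, fun k hk1 hk2 => (h3 k hk2 hk1).symm⟩
  loopless := by
    constructor
    rintro v ⟨i, j, hij, ⟨h1, _⟩, _⟩
    omega

/-- The base point of `DL_d(q)`. -/
def origin (d q : ℕ) : DLVert d q :=
  ⟨fun _ => treeOrigin q, by simp [treeOrigin]⟩

/-- A geodesic ray in `DL_d(q)` : an isometric embedding of `ℕ`. -/
def IsGeodesicRay (γ : ℕ → DLVert d q) : Prop :=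
  ∀ m n : ℕ, m ≤ n → (DLGraph d q).dist (γ m) (γ n) = n - m

/-- Two rays are asymptotic when they stay at uniformly bounded distance. -/
def Asymptotic (γ γ' : ℕ → DLVert d q) : Prop :=
  ∃ C : ℕ, ∀ n : ℕ, (DLGraph d q).dist (γ n) (γ' n) ≤ C

instance : TopologicalSpace (DLVert d q) := ⊥

/-- Geodesic rays emanating from the origin, with the topology of uniform
convergence on compact sets (= pointwise convergence, the vertex set being
discrete). -/
def RaySpace (d q : ℕ) : Type :=
  {γ : ℕ → DLVert d q // IsGeodesicRay γ ∧ γ 0 = origin d q}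

instance : TopologicalSpace (RaySpace d q) := by
  unfold RaySpace; infer_instance

lemma reachable_origin (γ : RaySpace d q) (n : ℕ) :
    (DLGraph d q).Reachable (origin d q) (γ.1 n) := by
  cases n with
  | zero => rw [γ.2.2]
  | succ n =>
    have h := γ.2.1 0 (n + 1) (Nat.zero_le _)
    have hne : (DLGraph d q).dist (γ.1 0) (γ.1 (n + 1)) ≠ 0 := by
      rw [h]; omega
    have := SimpleGraph.Reachable.of_dist_ne_zero hne
    rwa [γ.2.2] at this

/-- Asymptoticity as an equivalence relation on geodesic rays from the origin. -/
def asympSetoid (d q : ℕ) : Setoid (RaySpace d q) where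
  r γ γ' := Asymptotic γ.1 γ'.1
  iseqv := by
    constructor
    · intro γ
      exact ⟨0, fun n => by simp [SimpleGraph.dist_self]⟩
    · rintro γ γ' ⟨C, hC⟩
      exact ⟨C, fun n => by rw [SimpleGraph.dist_comm]; exact hC n⟩
    · rintro a b c ⟨C1, h1⟩ ⟨C2, h2⟩
      refine ⟨C1 + C2, fun n => ?_⟩
      have hab : (DLGraph d q).Reachable (a.1 n) (b.1 n) :=
        (reachable_origin a n).symm.trans (reachable_origin b n)
      have hbc : (DLGraph d q).Reachable (b.1 n) (c.1 n) :=
        (reachable_origin b n).symm.trans (reachable_origin c n)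
      obtain ⟨p, hp⟩ := hab.exists_walk_length_eq_dist
      obtain ⟨p', hp'⟩ := hbc.exists_walk_length_eq_dist
      calc (DLGraph d q).dist (a.1 n) (c.1 n) ≤ (p.append p').length :=
            SimpleGraph.dist_le _
        _ = (DLGraph d q).dist (a.1 n) (b.1 n) + (DLGraph d q).dist (b.1 n) (c.1 n) := by
            rw [SimpleGraph.Walk.length_append, hp, hp']
        _ ≤ C1 + C2 := Nat.add_le_add (h1 n) (h2 n)

/-- The visual boundary of `DL_d(q)`: asymptotic classes of geodesic rays
from the origin, with the quotient topology. -/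
def Boundary (d q : ℕ) : Type := Quotient (asympSetoid d q)

instance : TopologicalSpace (Boundary d q) := by
  unfold Boundary; infer_instance

/-- A ray in `DL_2(q)` descends for exactly `n` steps in tree `i`
(bottoming out at height `-n`), then ascends forever in tree `i`.
For `n = 0` this says the ray ascends forever in tree `i` with no turn. -/
def DescendsExactly (i : Fin 2) (n : ℕ) (γ : ℕ → DLVert 2 q) : Prop :=
  (∀ t : ℕ, t ≤ n → ((γ t).1 i).height = -(t : ℤ)) ∧
  (∀ t : ℕ, n ≤ t → ((γ t).1 i).height = (t : ℤ) - 2 * n)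

/-- The subset `C_n^i` of the boundary: classes of rays bottoming out in
tree `i` after descending exactly `n` edges. -/
def Cset (q : ℕ) (i : Fin 2) (n : ℕ) : Set (Boundary 2 q) :=
  {x | ∃ γ : RaySpace 2 q, Quotient.mk (asympSetoid 2 q) γ = x ∧ DescendsExactly i n γ.1}

/-- Projection of a path in `DL_d(q)` to the `i`-th tree. -/
def proj (i : Fin d) (γ : ℕ → DLVert d q) : ℕ → TreeVert q := fun n => (γ n).1 i

/-- Two (lazy) paths in the tree converge to the same end: both eventually
leave every ball, and they come within a uniformly bounded distance of each
other at arbitrarily late times. -/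
def SameEnd (a b : ℕ → TreeVert q) : Prop :=
  (∀ R : ℕ, ∃ N : ℕ, ∀ n, N ≤ n → R ≤ (TreeGraph q).dist (a 0) (a n)) ∧
  (∀ R : ℕ, ∃ N : ℕ, ∀ n, N ≤ n → R ≤ (TreeGraph q).dist (b 0) (b n)) ∧
  (∃ C : ℕ, ∀ N : ℕ, ∃ m n, N ≤ m ∧ N ≤ n ∧ (TreeGraph q).dist (a m) (b n) ≤ C)

/-- The step from `p m` to `p (m+1)` descends in tree `i`. -/
def StepDown (i : Fin d) (p : ℕ → DLVert d q) (m : ℕ) : Prop :=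
  treeAdjUp ((p (m + 1)).1 i) ((p m).1 i)

/-- The step from `p m` to `p (m+1)` ascends in tree `i`. -/
def StepUp (i : Fin d) (p : ℕ → DLVert d q) (m : ℕ) : Prop :=
  treeAdjUp ((p m).1 i) ((p (m + 1)).1 i)

/-- A turn in tree `i`: a subpath beginning with a descent in `T_i` at step `t`,
ending with an ascent in `T_i` at step `s`, with no intervening step
involving `T_i`. -/
def IsTurn (i : Fin d) (p : ℕ → DLVert d q) (t s : ℕ) : Prop :=
  t < s ∧ StepDown i p t ∧ StepUp i p s ∧
    ∀ m, t < m → m < s → (p (m + 1)).1 i = (p m).1 i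


lemma tv_ext {u v : TreeVert q} (h1 : u.height = v.height)
    (h2 : ∀ n, u.labels n = v.labels n) : u = v := by
  cases u; cases v
  simp only [TreeVert.mk.injEq]
  exact ⟨h1, funext h2⟩

def parentV (u : TreeVert q) : TreeVert q where
  height := u.height - 1
  labels := fun n => if n = u.height - 1 then 0 else u.labels n
  labels_lt := fun n => by
    by_cases h : n = u.height - 1 <;> simp [h, u.labels_lt n]
  supp_below := fun n hn => by
    by_cases h : n = u.height - 1
    · simp [h]
    · simp only [h, if_false]; exact u.supp_below n (by omega)
  fin_supp := u.fin_supp.subset (fun n hn => by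
    simp only [Function.mem_support] at hn ⊢
    by_cases h : n = u.height - 1
    · simp [h] at hn
    · simpa [h] using hn)

def childV (u : TreeVert q) (val : ℕ) (hval : val = 0 ∨ val < q) : TreeVert q where
  height := u.height + 1
  labels := fun n => if n = u.height then val else u.labels n
  labels_lt := fun n => by
    by_cases h : n = u.height <;> simp [h, hval, u.labels_lt n]
  supp_below := fun n hn => by
    by_cases h : n = u.height
    · exfalso; omega
    · simp only [h, if_false]; exact u.supp_below n (by omega)
  fin_supp := (u.fin_supp.union (Set.finite_singleton u.height)).subset (fun n hn => by
    simp only [Function.mem_support] at hn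
    by_cases h : n = u.height
    · right; simp [h]
    · left; simpa [h] using hn)

lemma adjUp_child (u : TreeVert q) (val : ℕ) (hval : val = 0 ∨ val < q) :
    treeAdjUp u (childV u val hval) :=
  ⟨rfl, fun n hn => by simp only [childV]; rw [if_neg hn]⟩

lemma adjUp_parent (u : TreeVert q) : treeAdjUp (parentV u) u := by
  constructor
  · show u.height = (u.height - 1) + 1; ring
  · intro n hn
    have hn' : n ≠ u.height - 1 := hn
    show u.labels n = if n = u.height - 1 then 0 else u.labels n
    rw [if_neg hn']

@[simp] lemma childV_height (u : TreeVert q) (val hval) :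
    (childV u val hval).height = u.height + 1 := rfl

@[simp] lemma parentV_height (u : TreeVert q) :
    (parentV u).height = u.height - 1 := rfl

section Chain

variable {V : Type*} {G : SimpleGraph V}

lemma walk_of_chain (c : ℕ → V) (p : ℕ → Prop) [DecidablePred p] (n : ℕ)
    (h : ∀ m, m < n → if p m then G.Adj (c m) (c (m+1)) else c (m+1) = c m) :
    ∃ w : G.Walk (c 0) (c n), w.length ≤ ((Finset.range n).filter p).card := by
  induction n with
  | zero => exact ⟨SimpleGraph.Walk.nil, by simp⟩
  | succ n ih =>
    obtain ⟨w, hw⟩ := ih (fun m hm => h m (Nat.lt_succ_of_lt hm))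
    have hcard : ((Finset.range n).filter p).card ≤ ((Finset.range (n+1)).filter p).card :=
      Finset.card_le_card (Finset.filter_subset_filter p
        (Finset.range_subset_range.mpr (Nat.le_succ n)))
    have hn := h n (Nat.lt_succ_self n)
    by_cases hp : p n
    · rw [if_pos hp] at hn
      refine ⟨w.concat hn, ?_⟩
      rw [SimpleGraph.Walk.length_concat]
      have : ((Finset.range (n+1)).filter p).card = ((Finset.range n).filter p).card + 1 := by
        rw [Finset.range_add_one, Finset.filter_insert, if_pos hp,
          Finset.card_insert_of_notMem (by simp)]
      omega
    · rw [if_neg hp] at hn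
      exact ⟨w.copy rfl hn.symm, by rw [SimpleGraph.Walk.length_copy]; exact le_trans hw hcard⟩

lemma dist_le_of_chain (c : ℕ → V) (p : ℕ → Prop) [DecidablePred p] (n : ℕ)
    (h : ∀ m, m < n → if p m then G.Adj (c m) (c (m+1)) else c (m+1) = c m) :
    G.dist (c 0) (c n) ≤ ((Finset.range n).filter p).card := by
  obtain ⟨w, hw⟩ := walk_of_chain c p n h
  exact le_trans (SimpleGraph.dist_le w) hw

end Chain

/-- The height change of tree `k` at slot `m` of schedule `s`. -/
def dlt (s : ℕ → Option (Fin d × Fin d)) (k : Fin d) (m : ℕ) : ℤ :=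
  match s m with
  | none => 0
  | some ab => (if ab.1 = k then 1 else 0) - (if ab.2 = k then 1 else 0)

lemma dlt_none {s : ℕ → Option (Fin d × Fin d)} {m : ℕ} (h : s m = none) (k : Fin d) :
    dlt s k m = 0 := by simp [dlt, h]

lemma dlt_some {s : ℕ → Option (Fin d × Fin d)} {m : ℕ} {ab : Fin d × Fin d}
    (h : s m = some ab) (k : Fin d) :
    dlt s k m = (if ab.1 = k then 1 else 0) - (if ab.2 = k then 1 else 0) := by
  simp [dlt, h]

/-- Prefix heights of tree `k` along schedule `s` started at `u`. -/
def hgt (s : ℕ → Option (Fin d × Fin d)) (u : DLVert d q) (k : Fin d) (m : ℕ) : ℤ :=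
  (u.1 k).height + ∑ j ∈ Finset.range m, dlt s k j

@[simp] lemma hgt_zero (s : ℕ → Option (Fin d × Fin d)) (u : DLVert d q) (k : Fin d) :
    hgt s u k 0 = (u.1 k).height := by simp [hgt]

lemma hgt_succ (s : ℕ → Option (Fin d × Fin d)) (u : DLVert d q) (k : Fin d) (m : ℕ) :
    hgt s u k (m+1) = hgt s u k m + dlt s k m := by
  simp [hgt, Finset.sum_range_succ]; ring

lemma sum_dlt (s : ℕ → Option (Fin d × Fin d))
    (hv : ∀ m ab, s m = some ab → ab.1 ≠ ab.2) (m : ℕ) :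
    (∑ k : Fin d, dlt s k m) = 0 := by
  rcases hs : s m with _ | ab
  · simp [dlt_none hs]
  · have hne := hv m ab hs
    simp only [dlt_some hs]
    rw [Finset.sum_sub_distrib]
    rw [Finset.sum_ite_eq (Finset.univ : Finset (Fin d)) ab.1 (fun _ => (1:ℤ))]
    rw [Finset.sum_ite_eq (Finset.univ : Finset (Fin d)) ab.2 (fun _ => (1:ℤ))]
    simp


/-- One step of the constructed tree path. -/
def stepTree (k : Fin d) (v : TreeVert q) (ab : Option (Fin d × Fin d))
    (x : TreeVert q) : TreeVert q :=
  match ab with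
  | none => x
  | some ab =>
    if ab.1 = k then childV x (v.labels x.height) (v.labels_lt _)
    else if ab.2 = k then parentV x else x

/-- The constructed coordinate paths realizing a schedule. -/
def bpath (s : ℕ → Option (Fin d × Fin d)) (u v : DLVert d q) :
    ℕ → Fin d → TreeVert q
  | 0 => u.1
  | m+1 => fun k => stepTree k (v.1 k) (s m) (bpath s u v m k)

lemma bpath_height (s : ℕ → Option (Fin d × Fin d)) (u v : DLVert d q)
    (hv : ∀ m ab, s m = some ab → ab.1 ≠ ab.2) (m : ℕ) (k : Fin d) :
    (bpath s u v m k).height = hgt s u k m := by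
  induction m with
  | zero => simp [bpath]
  | succ m ih =>
    rw [hgt_succ]
    show (stepTree k (v.1 k) (s m) (bpath s u v m k)).height = _
    rcases hs : s m with _ | ab
    · rw [dlt_none hs]; simpa [stepTree] using ih
    · have hne := hv m ab hs
      rw [dlt_some hs]
      by_cases h1 : ab.1 = k
      · have h2 : ¬ ab.2 = k := by rw [← h1]; exact fun hh => hne hh.symm
        simp [stepTree, h1, h2, ih]
      · by_cases h2 : ab.2 = k
        · simp [stepTree, h1, h2, ih]; omega
        · simp [stepTree, h1, h2, ih]

lemma bpath_labels (s : ℕ → Option (Fin d × Fin d)) (u v : DLVert d q)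
    (hv : ∀ m ab, s m = some ab → ab.1 ≠ ab.2) (m : ℕ) (k : Fin d) (lvl : ℤ)
    (hl : lvl < (bpath s u v m k).height) :
    (bpath s u v m k).labels lvl = (v.1 k).labels lvl ∨
      ((∀ j, j ≤ m → lvl < hgt s u k j) ∧
        (bpath s u v m k).labels lvl = (u.1 k).labels lvl) := by
  induction m with
  | zero =>
    right
    refine ⟨fun j hj => ?_, rfl⟩
    · interval_cases j
      simpa [bpath] using hl
  | succ m ih =>
    have hb := bpath_height s u v hv m k
    have hstep : ∀ j, j ≤ m + 1 → j ≤ m ∨ j = m + 1 := fun j hj => by omega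
    have hbp : bpath s u v (m+1) k = stepTree k (v.1 k) (s m) (bpath s u v m k) := rfl
    rw [hbp] at hl ⊢
    rcases hs : s m with _ | ab
    · rw [hs] at hl
      have heq : stepTree k (v.1 k) (none : Option (Fin d × Fin d)) (bpath s u v m k)
          = bpath s u v m k := rfl
      rw [heq] at hl ⊢
      rcases ih hl with h | ⟨h1, h2⟩
      · exact Or.inl h
      · refine Or.inr ⟨fun j hj => ?_, h2⟩
        rcases hstep j hj with hj' | hj'
        · exact h1 j hj'
        · subst hj'
          rw [hgt_succ, dlt_none hs]
          have := h1 m le_rfl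
          omega
    · rw [hs] at hl
      have hne := hv m ab hs
      by_cases h1 : ab.1 = k
      · -- up step
        have heq : stepTree k (v.1 k) (some ab) (bpath s u v m k)
            = childV (bpath s u v m k) ((v.1 k).labels (bpath s u v m k).height)
              ((v.1 k).labels_lt _) := by
          simp [stepTree, h1]
        rw [heq] at hl ⊢
        by_cases hlv : lvl = (bpath s u v m k).height
        · left
          show (if lvl = (bpath s u v m k).height then _ else _) = _
          rw [if_pos hlv, hlv]
        · have hlt : lvl < (bpath s u v m k).height := by
            have : lvl < (bpath s u v m k).height + 1 := by simpa using hl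
            omega
          have hlab : (childV (bpath s u v m k) ((v.1 k).labels (bpath s u v m k).height)
              ((v.1 k).labels_lt _)).labels lvl = (bpath s u v m k).labels lvl := by
            show (if lvl = (bpath s u v m k).height then _ else _) = _
            rw [if_neg hlv]
          rw [hlab]
          rcases ih hlt with h | ⟨ha, hb2⟩
          · exact Or.inl h
          · refine Or.inr ⟨fun j hj => ?_, hb2⟩
            rcases hstep j hj with hj' | hj'
            · exact ha j hj'
            · subst hj'
              have h2 : ¬ ab.2 = k := by rw [← h1]; exact fun hh => hne hh.symm
              rw [hgt_succ, dlt_some hs, if_pos h1, if_neg h2]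
              rw [hb] at hlt
              omega
      · by_cases h2 : ab.2 = k
        · -- down step
          have heq : stepTree k (v.1 k) (some ab) (bpath s u v m k)
              = parentV (bpath s u v m k) := by
            simp [stepTree, h1, h2]
          rw [heq] at hl ⊢
          have hlt : lvl < (bpath s u v m k).height := by
            have : lvl < (bpath s u v m k).height - 1 := by simpa using hl
            omega
          have hlv : lvl ≠ (bpath s u v m k).height - 1 := by
            have : lvl < (bpath s u v m k).height - 1 := by simpa using hl
            omega
          have hlab : (parentV (bpath s u v m k)).labels lvl
              = (bpath s u v m k).labels lvl := by
            show (if lvl = (bpath s u v m k).height - 1 then _ else _) = _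
            rw [if_neg hlv]
          rw [hlab]
          rcases ih hlt with h | ⟨ha, hb2⟩
          · exact Or.inl h
          · refine Or.inr ⟨fun j hj => ?_, hb2⟩
            rcases hstep j hj with hj' | hj'
            · exact ha j hj'
            · subst hj'
              rw [hgt_succ, dlt_some hs, if_neg h1, if_pos h2]
              have hx : lvl < (bpath s u v m k).height - 1 := by simpa using hl
              rw [hb] at hx
              omega
        · have heq : stepTree k (v.1 k) (some ab) (bpath s u v m k)
              = bpath s u v m k := by
            simp [stepTree, h1, h2]
          rw [heq] at hl ⊢
          rcases ih hl with h | ⟨ha, hb2⟩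
          · exact Or.inl h
          · refine Or.inr ⟨fun j hj => ?_, hb2⟩
            rcases hstep j hj with hj' | hj'
            · exact ha j hj'
            · subst hj'
              rw [hgt_succ, dlt_some hs, if_neg h1, if_neg h2]
              have := ha m le_rfl
              omega

lemma bpath_sum (s : ℕ → Option (Fin d × Fin d)) (u v : DLVert d q)
    (hv : ∀ m ab, s m = some ab → ab.1 ≠ ab.2) (m : ℕ) :
    (∑ k : Fin d, (bpath s u v m k).height) = 0 := by
  have : ∀ k : Fin d, (bpath s u v m k).height = hgt s u k m :=
    fun k => bpath_height s u v hv m k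
  simp only [this, hgt]
  rw [Finset.sum_add_distrib, u.2, Finset.sum_comm, zero_add]
  rw [Finset.sum_eq_zero]
  intro j _
  exact sum_dlt s hv j

lemma bpath_end (s : ℕ → Option (Fin d × Fin d)) (u v : DLVert d q)
    (hv : ∀ m ab, s m = some ab → ab.1 ≠ ab.2) (N : ℕ)
    (hsum : ∀ k, hgt s u k N = (v.1 k).height)
    (hmin : ∀ k lvl, (∀ m, m ≤ N → lvl < hgt s u k m) →
      (u.1 k).labels lvl = (v.1 k).labels lvl) (k : Fin d) :
    bpath s u v N k = v.1 k := by
  have hh : (bpath s u v N k).height = (v.1 k).height := by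
    rw [bpath_height s u v hv N k, hsum k]
  refine tv_ext hh (fun lvl => ?_)
  by_cases hl : lvl < (v.1 k).height
  · rcases bpath_labels s u v hv N k lvl (by rw [hh]; exact hl) with h | ⟨ha, hb⟩
    · exact h
    · rw [hb, hmin k lvl ha]
  · rw [(bpath s u v N k).supp_below lvl (by omega), (v.1 k).supp_below lvl (by omega)]

lemma dist_le_of_spec (s : ℕ → Option (Fin d × Fin d)) (u v : DLVert d q) (N : ℕ)
    (hv : ∀ m ab, s m = some ab → ab.1 ≠ ab.2)
    (hsum : ∀ k, hgt s u k N = (v.1 k).height)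
    (hmin : ∀ k lvl, (∀ m, m ≤ N → lvl < hgt s u k m) →
      (u.1 k).labels lvl = (v.1 k).labels lvl) :
    (DLGraph d q).dist u v ≤ ((Finset.range N).filter (fun m => (s m).isSome = true)).card := by
  classical
  set c : ℕ → DLVert d q := fun m => ⟨bpath s u v m, bpath_sum s u v hv m⟩ with hc
  have hc0 : c 0 = u := Subtype.ext rfl
  have hcN : c N = v := Subtype.ext (funext (bpath_end s u v hv N hsum hmin))
  have hch : ∀ m, m < N → if (s m).isSome = true then (DLGraph d q).Adj (c m) (c (m+1))
      else c (m+1) = c m := by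
    intro m _
    rcases hs : s m with _ | ab
    · simp only [hs, Option.isSome_none, Bool.false_eq_true, if_false]
      refine Subtype.ext (funext fun k => ?_)
      show stepTree k (v.1 k) (s m) (bpath s u v m k) = bpath s u v m k
      rw [hs]; rfl
    · simp only [hs, Option.isSome_some, if_true]
      have hne := hv m ab hs
      refine ⟨ab.1, ab.2, hne, ?_, ?_, ?_⟩
      · show treeAdjUp (bpath s u v m ab.1)
          (stepTree ab.1 (v.1 ab.1) (s m) (bpath s u v m ab.1))
        rw [hs]
        show treeAdjUp _ (if ab.1 = ab.1 then _ else _)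
        rw [if_pos rfl]
        exact adjUp_child _ _ _
      · show treeAdjUp (stepTree ab.2 (v.1 ab.2) (s m) (bpath s u v m ab.2))
          (bpath s u v m ab.2)
        rw [hs]
        show treeAdjUp (if ab.1 = ab.2 then _ else if ab.2 = ab.2 then _ else _) _
        rw [if_neg hne, if_pos rfl]
        exact adjUp_parent _
      · intro k hk1 hk2
        show bpath s u v m k = stepTree k (v.1 k) (s m) (bpath s u v m k)
        rw [hs]
        show _ = (if ab.1 = k then _ else if ab.2 = k then _ else _)
        rw [if_neg (fun hh => hk1 hh.symm), if_neg (fun hh => hk2 hh.symm)]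
  have := dist_le_of_chain (G := DLGraph d q) c (fun m => (s m).isSome = true) N hch
  rwa [hc0, hcN] at this

section Extract

lemma step_adj (γ : ℕ → DLVert d q) (hγ : IsGeodesicRay γ) (m : ℕ) : (DLGraph d q).Adj (γ m) (γ (m+1)) := by
  have h := hγ m (m+1) (Nat.le_succ m)
  have : (DLGraph d q).dist (γ m) (γ (m+1)) = 1 := by rw [h]; omega
  exact ((SimpleGraph.dist_eq_one_iff_adj).mp this)

noncomputable def schA (γ : ℕ → DLVert d q) (hγ : IsGeodesicRay γ) (m : ℕ) : Fin d := (step_adj γ hγ m).choose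

noncomputable def schB (γ : ℕ → DLVert d q) (hγ : IsGeodesicRay γ) (m : ℕ) : Fin d := (step_adj γ hγ m).choose_spec.choose

lemma sch_spec (γ : ℕ → DLVert d q) (hγ : IsGeodesicRay γ) (m : ℕ) :
    schA γ hγ m ≠ schB γ hγ m ∧
    treeAdjUp ((γ m).1 (schA γ hγ m)) ((γ (m+1)).1 (schA γ hγ m)) ∧
    treeAdjUp ((γ (m+1)).1 (schB γ hγ m)) ((γ m).1 (schB γ hγ m)) ∧
    ∀ k, k ≠ schA γ hγ m → k ≠ schB γ hγ m → (γ m).1 k = (γ (m+1)).1 k :=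
  (step_adj γ hγ m).choose_spec.choose_spec

noncomputable def sch (γ : ℕ → DLVert d q) (hγ : IsGeodesicRay γ) (m : ℕ) : Option (Fin d × Fin d) :=
  some (schA γ hγ m, schB γ hγ m)

lemma sch_valid (γ : ℕ → DLVert d q) (hγ : IsGeodesicRay γ) : ∀ m ab, sch γ hγ m = some ab → ab.1 ≠ ab.2 := by
  intro m ab h
  rw [sch] at h
  cases h
  exact (sch_spec γ hγ m).1

lemma sch_height (γ : ℕ → DLVert d q) (hγ : IsGeodesicRay γ) (k : Fin d) (m : ℕ) : ((γ m).1 k).height = hgt (sch γ hγ) (γ 0) k m := by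
  induction m with
  | zero => simp
  | succ m ih =>
    rw [hgt_succ, ← ih, dlt_some (rfl : sch γ hγ m = some (schA γ hγ m, schB γ hγ m))]
    obtain ⟨hne, hup, hdn, hoth⟩ := sch_spec γ hγ m
    by_cases h1 : schA γ hγ m = k
    · have h2 : ¬ schB γ hγ m = k := fun hh => hne (h1.trans hh.symm)
      rw [if_pos h1, if_neg h2]
      subst h1
      omega
    · by_cases h2 : schB γ hγ m = k
      · rw [if_neg h1, if_pos h2]
        subst h2
        omega
      · rw [if_neg h1, if_neg h2]
        rw [hoth k (fun hh => h1 hh.symm) (fun hh => h2 hh.symm)]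
        omega

lemma sch_labels (γ : ℕ → DLVert d q) (hγ : IsGeodesicRay γ) (k : Fin d) (lvl : ℤ) (n : ℕ)
    (h : ∀ τ, τ ≤ n → lvl < ((γ τ).1 k).height) :
    ((γ n).1 k).labels lvl = ((γ 0).1 k).labels lvl := by
  induction n with
  | zero => rfl
  | succ n ih =>
    rw [← ih (fun τ hτ => h τ (Nat.le_succ_of_le hτ))]
    obtain ⟨hne, hup, hdn, hoth⟩ := sch_spec γ hγ n
    by_cases h1 : schA γ hγ n = k
    · subst h1
      exact hup.2 lvl (by have := h n (Nat.le_succ n); omega)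
    · by_cases h2 : schB γ hγ n = k
      · subst h2
        exact (hdn.2 lvl (by have := h (n+1) le_rfl; omega)).symm
      · rw [hoth k (fun hh => h1 hh.symm) (fun hh => h2 hh.symm)]

lemma schA_of_up (γ : ℕ → DLVert d q) (hγ : IsGeodesicRay γ) {i : Fin d} {t : ℕ} (h : StepUp i γ t) : schA γ hγ t = i := by
  obtain ⟨hne, hup, hdn, hoth⟩ := sch_spec γ hγ t
  by_contra hA
  by_cases hB : schB γ hγ t = i
  · subst hB
    have h1 := h.1
    have h2 := hdn.1
    omega
  · have := hoth i (fun hh => hA hh.symm) (fun hh => hB hh.symm)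
    have h1 := h.1
    rw [this] at h1
    omega

lemma schB_of_down (γ : ℕ → DLVert d q) (hγ : IsGeodesicRay γ) {i : Fin d} {t : ℕ} (h : StepDown i γ t) : schB γ hγ t = i := by
  obtain ⟨hne, hup, hdn, hoth⟩ := sch_spec γ hγ t
  by_contra hB
  by_cases hA : schA γ hγ t = i
  · subst hA
    have h1 := h.1
    have h2 := hup.1
    omega
  · have := hoth i (fun hh => hA hh.symm) (fun hh => hB hh.symm)
    have h1 := h.1
    rw [this] at h1
    omega

end Extract

section Surgery

/-- The correction to the height profile caused by the surgery. -/
def corr (i j1 : Fin d) (t t' : ℕ) (k : Fin d) (m : ℕ) : ℤ :=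
  (if m = t then (if k = i then (-1:ℤ) else if k = j1 then 1 else 0) else 0) +
  (if m = t' then (if k = i then (1:ℤ) else if k = j1 then -1 else 0) else 0)

lemma surgery (γ : ℕ → DLVert d q) (hγ : IsGeodesicRay γ) (i : Fin d)
    (n t t' : ℕ) (htt : t < t') (htn : t' < n)
    (hup : StepUp i γ t) (hdn : StepDown i γ t')
    (houts : ∃ τ, τ ≤ n ∧ (τ ≤ t ∨ t' < τ) ∧
      ∀ τ', τ' ≤ n →
        ((γ τ).1 (schB γ hγ t)).height ≤ ((γ τ').1 (schB γ hγ t)).height) :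
    False := by
  classical
  set j1 := schB γ hγ t with hj1
  set j2 := schA γ hγ t' with hj2
  have hAt : schA γ hγ t = i := schA_of_up γ hγ hup
  have hBt' : schB γ hγ t' = i := schB_of_down γ hγ hdn
  have hj1i : j1 ≠ i := by
    rw [hj1, ← hAt]
    exact fun hh => (sch_spec γ hγ t).1 hh.symm
  have hj2i : j2 ≠ i := by
    rw [hj2, ← hBt']
    exact (sch_spec γ hγ t').1
  -- the modified schedule
  set s' : ℕ → Option (Fin d × Fin d) := fun m =>
    if m = t then none
    else if m = t' then (if j2 = j1 then none else some (j2, j1))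
    else sch γ hγ m with hs'
  have hs't : s' t = none := by simp [hs']
  have hs't' : s' t' = (if j2 = j1 then none else some (j2, j1)) := by
    have : t' ≠ t := by omega
    simp [hs', this]
  have hs'o : ∀ m, m ≠ t → m ≠ t' → s' m = sch γ hγ m := by
    intro m h1 h2; simp [hs', h1, h2]
  have hvalid : ∀ m ab, s' m = some ab → ab.1 ≠ ab.2 := by
    intro m ab h
    by_cases h1 : m = t
    · rw [h1, hs't] at h; cases h
    · by_cases h2 : m = t'
      · rw [h2, hs't'] at h
        by_cases h3 : j2 = j1
        · rw [if_pos h3] at h; cases h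
        · rw [if_neg h3] at h; cases h; exact h3
      · exact sch_valid γ hγ m ab (by rw [← hs'o m h1 h2]; exact h)
  -- the dlt identity
  have hscht : sch γ hγ t = some (i, j1) := by rw [sch, hAt, ← hj1]
  have hscht' : sch γ hγ t' = some (j2, i) := by rw [sch, hBt', ← hj2]
  have hdlt : ∀ k m, dlt s' k m = dlt (sch γ hγ) k m + corr i j1 t t' k m := by
    intro k m
    rcases eq_or_ne m t with h1 | h1
    · rw [dlt_none (by rw [h1]; exact hs't), dlt_some (show sch γ hγ m = some (i, j1) by
        rw [h1]; exact hscht), corr, if_pos h1, if_neg (by omega : ¬ m = t')]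
      by_cases hki : k = i
      · rw [if_pos hki.symm, if_neg (fun hh : j1 = k => hj1i (hh.trans hki)), if_pos hki]
        ring
      · rw [if_neg (fun hh : i = k => hki hh.symm), if_neg hki]
        by_cases hkj : k = j1
        · rw [if_pos hkj.symm, if_pos hkj]; ring
        · rw [if_neg (fun hh : j1 = k => hkj hh.symm), if_neg hkj]; ring
    · rcases eq_or_ne m t' with h2 | h2
      · rw [dlt_some (show sch γ hγ m = some (j2, i) by rw [h2]; exact hscht'),
          corr, if_neg h1, if_pos h2]
        by_cases h3 : j2 = j1
        · rw [dlt_none (show s' m = none by rw [h2, hs't', if_pos h3])]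
          by_cases hki : k = i
          · rw [if_neg (fun hh : j2 = k => hj2i (hh.trans hki)), if_pos hki.symm,
              if_pos hki]
            ring
          · rw [if_neg (fun hh : i = k => hki hh.symm), if_neg hki]
            by_cases hkj : k = j1
            · rw [if_pos ((h3.trans hkj.symm) : j2 = k), if_pos hkj]; ring
            · rw [if_neg (fun hh : j2 = k => hkj (hh.symm.trans h3)), if_neg hkj]
              ring
        · rw [dlt_some (show s' m = some (j2, j1) by rw [h2, hs't', if_neg h3])]
          by_cases hki : k = i
          · rw [if_neg (fun hh : j1 = k => hj1i (hh.trans hki)), if_pos hki.symm,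
              if_pos hki]
            ring
          · rw [if_neg (fun hh : i = k => hki hh.symm), if_neg hki]
            by_cases hkj : k = j1
            · rw [if_pos hkj.symm, if_pos hkj]; ring
            · rw [if_neg (fun hh : j1 = k => hkj hh.symm), if_neg hkj]; ring
      · have hcon : s' m = sch γ hγ m := hs'o m h1 h2
        have : dlt s' k m = dlt (sch γ hγ) k m := by
          unfold dlt; rw [hcon]
        rw [this, corr, if_neg h1, if_neg h2]
        ring
  -- prefix sums of the correction
  have hcorrsum : ∀ (k : Fin d) (M : ℕ), (∑ m ∈ Finset.range M, corr i j1 t t' k m)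
      = (if t < M then (if k = i then (-1:ℤ) else if k = j1 then 1 else 0) else 0)
      + (if t' < M then (if k = i then (1:ℤ) else if k = j1 then -1 else 0) else 0) := by
    intro k M
    unfold corr
    rw [Finset.sum_add_distrib]
    congr 1
    · rw [Finset.sum_ite_eq' (Finset.range M) t
        (fun _ => (if k = i then (-1:ℤ) else if k = j1 then 1 else 0))]
      simp [Finset.mem_range]
    · rw [Finset.sum_ite_eq' (Finset.range M) t'
        (fun _ => (if k = i then (1:ℤ) else if k = j1 then -1 else 0))]
      simp [Finset.mem_range]
  have hH : ∀ (k : Fin d) (M : ℕ), hgt s' (γ 0) k M = hgt (sch γ hγ) (γ 0) k M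
      + ((if t < M then (if k = i then (-1:ℤ) else if k = j1 then 1 else 0) else 0)
      + (if t' < M then (if k = i then (1:ℤ) else if k = j1 then -1 else 0) else 0)) := by
    intro k M
    unfold hgt
    rw [Finset.sum_congr rfl (fun m _ => hdlt k m), Finset.sum_add_distrib, hcorrsum k M]
    ring
  have hsch : ∀ (k : Fin d) (M : ℕ), hgt (sch γ hγ) (γ 0) k M = ((γ M).1 k).height :=
    fun k M => (sch_height γ hγ k M).symm
  -- apply the construction lemma
  have hdist := dist_le_of_spec s' (γ 0) (γ n) n hvalid ?_ ?_
  · -- cardinality bound gives a contradiction with the geodesic property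
    have hcard : ((Finset.range n).filter (fun m => (s' m).isSome = true)).card ≤ n - 1 := by
      have hsub : (Finset.range n).filter (fun m => (s' m).isSome = true)
          ⊆ (Finset.range n).erase t := by
        intro m hm
        rw [Finset.mem_filter] at hm
        rw [Finset.mem_erase]
        refine ⟨?_, hm.1⟩
        intro hmt
        rw [hmt, hs't] at hm
        simp at hm
      have := Finset.card_le_card hsub
      rwa [Finset.card_erase_of_mem (Finset.mem_range.mpr (by omega)),
        Finset.card_range] at this
    have hgeo := hγ 0 n (Nat.zero_le n)
    rw [Nat.sub_zero] at hgeo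
    rw [hgeo] at hdist
    omega
  · -- endpoint heights
    intro k
    rw [hH, hsch, if_pos (by omega : t < n), if_pos (by omega : t' < n)]
    by_cases hki : k = i
    · rw [if_pos hki, if_pos hki]; ring
    · rw [if_neg hki, if_neg hki]
      by_cases hkj : k = j1
      · rw [if_pos hkj, if_pos hkj]; ring
      · rw [if_neg hkj, if_neg hkj]; ring
  · -- label agreement below the dips
    intro k lvl hlvl
    have key : ∀ τ, τ ≤ n → lvl < ((γ τ).1 k).height := by
      by_cases hki : k = i
      · subst hki
        intro τ hτ
        have h1 := hlvl τ hτ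
        rw [hH, hsch] at h1
        have h2 : (if t < τ then (-1:ℤ) else 0) + (if t' < τ then (1:ℤ) else 0) ≤ 0 := by
          split_ifs <;> omega
        rw [if_pos rfl, if_pos rfl] at h1
        omega
      · by_cases hkj : k = j1
        · subst hkj
          obtain ⟨τ0, hτ0n, hτ0out, hτ0min⟩ := houts
          intro τ hτ
          have h1 := hlvl τ0 hτ0n
          rw [hH, hsch] at h1
          rw [if_neg hj1i, if_neg hj1i, if_pos rfl, if_pos rfl] at h1
          have h2 : (if t < τ0 then (1:ℤ) else 0) + (if t' < τ0 then (-1:ℤ) else 0) = 0 := by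
            rcases hτ0out with h | h
            · rw [if_neg (by omega), if_neg (by omega)]; ring
            · rw [if_pos (by omega), if_pos (by omega)]; ring
          have h3 := hτ0min τ hτ
          omega
        · intro τ hτ
          have h1 := hlvl τ hτ
          rw [hH, hsch] at h1
          rw [if_neg hki, if_neg hki, if_neg hkj, if_neg hkj] at h1
          have h2 : (if t < τ then (0:ℤ) else 0) + (if t' < τ then (0:ℤ) else 0) = 0 := by
            split_ifs <;> ring
          omega
    exact (sch_labels γ hγ k lvl n key).symm

end Surgery

section Glue

lemma tree_walk_height_le {u v : TreeVert q} (w : (TreeGraph q).Walk u v) :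
    u.height - v.height ≤ (w.length : ℤ) ∧ v.height - u.height ≤ (w.length : ℤ) := by
  induction w with
  | nil => simp
  | @cons a b c h p ih =>
    rw [SimpleGraph.Walk.length_cons]
    have hb : b.height = a.height + 1 ∨ a.height = b.height + 1 := by
      rcases h with ⟨h1, _⟩ | ⟨h1, _⟩
      · exact Or.inl h1
      · exact Or.inr h1
    push_cast
    omega

lemma height_le_dist {u v : TreeVert q} (h : (TreeGraph q).Reachable u v) (R : ℕ)
    (hR : (R : ℤ) ≤ v.height - u.height ∨ (R : ℤ) ≤ u.height - v.height) :
    R ≤ (TreeGraph q).dist u v := by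
  obtain ⟨w, hw⟩ := h.exists_walk_length_eq_dist
  have := tree_walk_height_le w
  rw [hw] at this
  omega

lemma proj_reachable (γ : ℕ → DLVert d q) (hγ : IsGeodesicRay γ) (i : Fin d) (n : ℕ) :
    (TreeGraph q).Reachable ((γ 0).1 i) ((γ n).1 i) := by
  induction n with
  | zero => exact SimpleGraph.Reachable.refl _
  | succ n ih =>
    refine ih.trans ?_
    obtain ⟨hne, hup, hdn, hoth⟩ := sch_spec γ hγ n
    by_cases h1 : schA γ hγ n = i
    · rw [h1] at hup
      exact SimpleGraph.Adj.reachable (Or.inl hup)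
    · by_cases h2 : schB γ hγ n = i
      · rw [h2] at hdn
        exact SimpleGraph.Adj.reachable (Or.inr hdn)
      · rw [hoth i (fun hh => h1 hh.symm) (fun hh => h2 hh.symm)]

lemma event_const (γ : ℕ → DLVert d q) (i : Fin d)
    (hfin : {m : ℕ | (γ (m + 1)).1 i ≠ (γ m).1 i}.Finite) :
    ∃ N : ℕ, ∀ n : ℕ, N ≤ n → (γ n).1 i = (γ N).1 i := by
  obtain ⟨B, hB⟩ := hfin.bddAbove
  refine ⟨B + 1, fun n hn => ?_⟩
  induction n, hn using Nat.le_induction with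
  | base => rfl
  | succ n hn ih =>
    rw [← ih]
    by_cases h : (γ (n+1)).1 i ≠ (γ n).1 i
    · exact absurd (hB h) (by omega)
    · rw [not_not] at h
      exact h

lemma move_updown (γ : ℕ → DLVert d q) (hγ : IsGeodesicRay γ) (i : Fin d) (m : ℕ)
    (h : (γ (m+1)).1 i ≠ (γ m).1 i) : StepUp i γ m ∨ StepDown i γ m := by
  obtain ⟨hne, hup, hdn, hoth⟩ := sch_spec γ hγ m
  by_cases h1 : schA γ hγ m = i
  · rw [h1] at hup
    exact Or.inl hup
  · by_cases h2 : schB γ hγ m = i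
    · rw [h2] at hdn
      exact Or.inr hdn
    · exact absurd (hoth i (fun hh => h1 hh.symm) (fun hh => h2 hh.symm)).symm h

lemma no_late_pattern (γ : ℕ → DLVert d q) (hγ : IsGeodesicRay γ) (i : Fin d) :
    ∃ T : ℕ, ∀ a b : ℕ, T ≤ a → a < b → ¬(StepUp i γ a ∧ StepDown i γ b) := by
  classical
  by_contra hcon
  push_neg at hcon
  choose F G h1 h2 h3 h4 using hcon
  set g : ℕ → ℕ := fun r => Nat.rec 0 (fun _ ih => G ih + 1) r with hg
  have hg0 : g 0 = 0 := rfl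
  have hgs : ∀ r, g (r+1) = G (g r) + 1 := fun r => rfl
  have hxF : ∀ x, x ≤ F x := h1
  have hFG : ∀ x, F x < G x := h2
  have hgmono : StrictMono g := by
    apply strictMono_nat_of_lt_succ
    intro r
    rw [hgs]
    have := hxF (g r)
    have := hFG (g r)
    omega
  have hGg : ∀ a b : ℕ, a < b → G (g a) < F (g b) := by
    intro a b hab
    have h5 : g (a+1) ≤ g b := hgmono.le_iff_le.mpr hab
    have := hxF (g b)
    rw [hgs] at h5
    omega
  set n : ℕ := G (g d) + 1 with hn
  set K : Fin (d+1) → Fin d := fun r => schB γ hγ (F (g r.1)) with hK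
  have hcard : Fintype.card (Fin d) < Fintype.card (Fin (d+1)) := by simp
  obtain ⟨r, r', hrr, hKrr⟩ := Fintype.exists_ne_map_eq_of_card_lt K hcard
  -- order them
  wlog hlt : r.1 < r'.1 generalizing r r'
  · have hne : r.1 ≠ r'.1 := fun h => hrr (Fin.ext h)
    exact this r' r hrr.symm hKrr.symm (by omega)
  -- minimum of the K r profile on [0, n]
  obtain ⟨τ0, hτ0mem, hτ0min⟩ := Finset.exists_min_image (Finset.range (n+1))
    (fun τ => ((γ τ).1 (K r)).height) ⟨0, by simp⟩
  rw [Finset.mem_range] at hτ0mem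
  have hτ0min' : ∀ τ', τ' ≤ n → ((γ τ0).1 (K r)).height ≤ ((γ τ').1 (K r)).height :=
    fun τ' hτ' => hτ0min τ' (Finset.mem_range.mpr (by omega))
  have hrd : ∀ s : Fin (d+1), G (g s.1) < n := by
    intro s
    have hs : s.1 ≤ d := by omega
    rcases eq_or_lt_of_le hs with hh | hh
    · rw [hn, hh]; omega
    · have := hGg s.1 d hh
      have := hFG (g d)
      omega
  by_cases hin : F (g r.1) < τ0 ∧ τ0 ≤ G (g r.1)
  · -- use the later pair r'
    refine surgery γ hγ i n (F (g r'.1)) (G (g r'.1)) (hFG _) (hrd r')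
      (h3 _) (h4 _) ?_
    refine ⟨τ0, by omega, Or.inl ?_, ?_⟩
    · have := hGg r.1 r'.1 hlt
      omega
    · rw [show schB γ hγ (F (g r'.1)) = K r from hKrr.symm ▸ rfl]
      exact hτ0min'
  · -- use the pair r itself
    refine surgery γ hγ i n (F (g r.1)) (G (g r.1)) (hFG _) (hrd r)
      (h3 _) (h4 _) ?_
    refine ⟨τ0, by omega, by omega, ?_⟩
    exact hτ0min'

end Glue


/-- the projection of a geodesic ray in `DL_d(q)` to a tree `T_i`
converges to at most one end: it is either eventually constant or it
eventually leaves every ball of the tree (hence converges to a single end);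
and if it traverses only finitely many edges it is eventually constant. -/
theorem ray_projection_one_end {d q : ℕ} (hq : 2 ≤ q) (hd : 2 ≤ d)
    (γ : ℕ → DLVert d q) (hγ : IsGeodesicRay γ) (i : Fin d) :
    ((∃ N : ℕ, ∀ n : ℕ, N ≤ n → (γ n).1 i = (γ N).1 i) ∨
      (∀ R : ℕ, ∃ N : ℕ, ∀ n : ℕ, N ≤ n →
        R ≤ (TreeGraph q).dist ((γ 0).1 i) ((γ n).1 i))) ∧
    ({m : ℕ | (γ (m + 1)).1 i ≠ (γ m).1 i}.Finite →
      ∃ N : ℕ, ∀ n : ℕ, N ≤ n → (γ n).1 i = (γ N).1 i) := by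
  constructor
  · by_cases hfin : {m : ℕ | (γ (m + 1)).1 i ≠ (γ m).1 i}.Finite
    · exact Or.inl (event_const γ i hfin)
    · right
      obtain ⟨T, hT⟩ := no_late_pattern γ hγ i
      have hinf : ∀ M : ℕ, ∃ m, M ≤ m ∧ (γ (m+1)).1 i ≠ (γ m).1 i := by
        intro M
        by_contra hc
        push_neg at hc
        refine hfin (Set.Finite.subset (Set.finite_Iio M) (fun m hm => ?_))
        by_contra hmM
        simp only [Set.mem_Iio, not_lt] at hmM
        exact hm (hc m hmM)
      intro R
      by_cases hups : ∃ σ, T ≤ σ ∧ StepUp i γ σ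
      · obtain ⟨σ, hσT, hσup⟩ := hups
        have nodown : ∀ m, σ ≤ m → ¬ StepDown i γ m := by
          intro m hm hdnm
          rcases eq_or_lt_of_le hm with he | hl
          · rw [← he] at hdnm
            have h5 := hσup.1
            have h6 := hdnm.1
            omega
          · exact hT σ m hσT hl ⟨hσup, hdnm⟩
        have hstep : ∀ m, σ ≤ m → ((γ m).1 i).height ≤ ((γ (m+1)).1 i).height := by
          intro m hm
          by_cases hmv : (γ (m+1)).1 i ≠ (γ m).1 i
          · rcases move_updown γ hγ i m hmv with h | h
            · rw [h.1]; omega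
            · exact absurd h (nodown m hm)
          · rw [not_not] at hmv
            rw [hmv]
        have hmono : ∀ a b, σ ≤ a → a ≤ b → ((γ a).1 i).height ≤ ((γ b).1 i).height := by
          intro a b ha hab
          induction b, hab using Nat.le_induction with
          | base => exact le_refl _
          | succ b hb ih => exact le_trans ih (hstep b (le_trans ha hb))
        have hunb : ∀ j : ℕ, ∃ N, σ ≤ N ∧
            ((γ σ).1 i).height + (j : ℤ) ≤ ((γ N).1 i).height := by
          intro j
          induction j with
          | zero => exact ⟨σ, le_rfl, by omega⟩
          | succ j ih =>
            obtain ⟨N, hN1, hN2⟩ := ih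
            obtain ⟨m, hm1, hm2⟩ := hinf N
            have hup' : StepUp i γ m := by
              rcases move_updown γ hγ i m hm2 with h | h
              · exact h
              · exact absurd h (nodown m (le_trans hN1 hm1))
            refine ⟨m+1, by omega, ?_⟩
            have h5 := hmono N m hN1 hm1
            have h6 := hup'.1
            push_cast
            omega
        obtain ⟨N, hN1, hN2⟩ :=
          hunb (R + (((γ 0).1 i).height - ((γ σ).1 i).height).toNat)
        refine ⟨N, fun n hn => ?_⟩
        refine height_le_dist (proj_reachable γ hγ i n) R (Or.inl ?_)
        have h7 := hmono N n hN1 hn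
        have h8 : (((γ 0).1 i).height - ((γ σ).1 i).height : ℤ)
            ≤ (((((γ 0).1 i).height - ((γ σ).1 i).height).toNat : ℤ)) :=
          Int.self_le_toNat _
        push_cast at hN2
        omega
      · push_neg at hups
        have hstep : ∀ m, T ≤ m → ((γ (m+1)).1 i).height ≤ ((γ m).1 i).height := by
          intro m hm
          by_cases hmv : (γ (m+1)).1 i ≠ (γ m).1 i
          · rcases move_updown γ hγ i m hmv with h | h
            · exact absurd h (hups m hm)
            · rw [h.1]; omega
          · rw [not_not] at hmv
            rw [hmv]
        have hmono : ∀ a b, T ≤ a → a ≤ b → ((γ b).1 i).height ≤ ((γ a).1 i).height := by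
          intro a b ha hab
          induction b, hab using Nat.le_induction with
          | base => exact le_refl _
          | succ b hb ih => exact le_trans (hstep b (le_trans ha hb)) ih
        have hunb : ∀ j : ℕ, ∃ N, T ≤ N ∧
            ((γ N).1 i).height ≤ ((γ T).1 i).height - (j : ℤ) := by
          intro j
          induction j with
          | zero => exact ⟨T, le_rfl, by omega⟩
          | succ j ih =>
            obtain ⟨N, hN1, hN2⟩ := ih
            obtain ⟨m, hm1, hm2⟩ := hinf N
            have hdn' : StepDown i γ m := by
              rcases move_updown γ hγ i m hm2 with h | h
              · exact absurd h (hups m (le_trans hN1 hm1))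
              · exact h
            refine ⟨m+1, by omega, ?_⟩
            have h5 := hmono N m hN1 hm1
            have h6 := hdn'.1
            push_cast
            omega
        obtain ⟨N, hN1, hN2⟩ :=
          hunb (R + (((γ T).1 i).height - ((γ 0).1 i).height).toNat)
        refine ⟨N, fun n hn => ?_⟩
        refine height_le_dist (proj_reachable γ hγ i n) R (Or.inr ?_)
        have h7 := hmono N n hN1 hn
        have h8 : (((γ T).1 i).height - ((γ 0).1 i).height : ℤ)
            ≤ (((((γ T).1 i).height - ((γ 0).1 i).height).toNat : ℤ)) :=
          Int.self_le_toNat _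
        push_cast at hN2
        omega
  · intro hfin
    exact event_const γ i hfin


end DL
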